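/- arXiv:1003.0443 — 4 statements merged into one kernel-verified Lean document; each statement's English description precedes it below -/
import Mathlib

section
/- Let 0 < ε < 1, τ = (1−√ε)/(1+√ε), and let μ ∈ ℂ satisfy √ε·|μ| ≤ 1/2. Then the series ∑_{k=0}^∞ log(1−√ε μ τ^k) converges absolutely and |∑_{k=0}^∞ [log(1−√ε μ τ^k) + √ε μ τ^k]| ≤ ε|μ|²/(1−τ²). -/
open Complex

lemma log_one_sub_add_self_norm_le {w : ℂ} (hw : ‖w‖ ≤ 1/2) :
    ‖Complex.log (1 - w) + w‖ ≤ ‖w‖ ^ 2 := by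
  have h1 : ‖-w‖ < 1 := by rw [norm_neg]; linarith
  have h := Complex.norm_log_one_add_sub_self_le h1
  rw [norm_neg] at h
  have heq : Complex.log (1 - w) + w = Complex.log (1 + -w) - -w := by
    rw [sub_eq_add_neg, sub_neg_eq_add]
  rw [heq]
  refine h.trans ?_
  have hpos : (0:ℝ) < 1 - ‖w‖ := by linarith
  have h2 : (1 - ‖w‖)⁻¹ ≤ 2 := by
    rw [inv_le_comm₀ hpos (by norm_num)]
    linarith
  nlinarith [sq_nonneg ‖w‖]

theorem prefactor_log_sum_bound (ε : ℝ) (h0 : 0 < ε) (h1 : ε < 1) (μ : ℂ)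
    (hμ : Real.sqrt ε * ‖μ‖ ≤ 1/2) :
    (Summable fun k : ℕ =>
      ‖Complex.log (1 - (Real.sqrt ε : ℂ) * μ *
          (((1 - Real.sqrt ε) / (1 + Real.sqrt ε) : ℝ) : ℂ) ^ k)‖) ∧
    ‖∑' k : ℕ,
        (Complex.log (1 - (Real.sqrt ε : ℂ) * μ *
            (((1 - Real.sqrt ε) / (1 + Real.sqrt ε) : ℝ) : ℂ) ^ k)
          + (Real.sqrt ε : ℂ) * μ *
            (((1 - Real.sqrt ε) / (1 + Real.sqrt ε) : ℝ) : ℂ) ^ k)‖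
      ≤ ε * ‖μ‖ ^ 2 / (1 - ((1 - Real.sqrt ε) / (1 + Real.sqrt ε)) ^ 2) := by
  set s : ℝ := Real.sqrt ε with hs
  set τ : ℝ := (1 - s) / (1 + s) with hτ
  have hs0 : 0 < s := Real.sqrt_pos.mpr h0
  have hs1 : s < 1 := by
    rw [hs, show (1:ℝ) = Real.sqrt 1 by simp]
    exact Real.sqrt_lt_sqrt h0.le h1
  have hτ0 : 0 < τ := div_pos (by linarith) (by linarith)
  have hτ1 : τ < 1 := by
    rw [hτ, div_lt_one (by linarith)]
    linarith
  set w : ℕ → ℂ := fun k => (s : ℂ) * μ * ((τ : ℝ) : ℂ) ^ k with hw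
  have hnw : ∀ k, ‖w k‖ = s * ‖μ‖ * τ ^ k := by
    intro k
    rw [hw]
    simp only [norm_mul, norm_pow, Complex.norm_real, Real.norm_eq_abs,
      abs_of_pos hs0, abs_of_pos hτ0]
  have hwhalf : ∀ k, ‖w k‖ ≤ 1/2 := by
    intro k
    rw [hnw k]
    calc s * ‖μ‖ * τ ^ k ≤ s * ‖μ‖ * 1 := by
          apply mul_le_mul_of_nonneg_left (pow_le_one₀ hτ0.le hτ1.le)
          positivity
      _ ≤ 1/2 := by rw [mul_one]; exact hμ
  -- bound on each term of the log sum
  have hlogle : ∀ k, ‖Complex.log (1 - w k)‖ ≤ (3/2 * (s * ‖μ‖)) * τ ^ k := by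
    intro k
    have h2 := log_one_sub_add_self_norm_le (hwhalf k)
    have h3 : ‖Complex.log (1 - w k)‖ ≤ ‖Complex.log (1 - w k) + w k‖ + ‖w k‖ := by
      calc ‖Complex.log (1 - w k)‖ = ‖(Complex.log (1 - w k) + w k) - w k‖ := by ring_nf
        _ ≤ ‖Complex.log (1 - w k) + w k‖ + ‖w k‖ := norm_sub_le _ _
    have h4 : ‖w k‖ ^ 2 ≤ (1/2) * ‖w k‖ := by
      nlinarith [hwhalf k, norm_nonneg (w k)]
    rw [hnw k] at *
    nlinarith [pow_nonneg hτ0.le k]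
  have hgeo : Summable fun k : ℕ => (3/2 * (s * ‖μ‖)) * τ ^ k :=
    (summable_geometric_of_lt_one hτ0.le hτ1).mul_left _
  have hsum1 : Summable fun k : ℕ => ‖Complex.log (1 - w k)‖ :=
    Summable.of_nonneg_of_le (fun k => norm_nonneg _) hlogle hgeo
  refine ⟨hsum1, ?_⟩
  -- second part
  have hτ2 : τ ^ 2 < 1 := by nlinarith
  have hsq : ∀ k, ‖Complex.log (1 - w k) + w k‖ ≤ (ε * ‖μ‖ ^ 2) * (τ ^ 2) ^ k := by
    intro k
    refine (log_one_sub_add_self_norm_le (hwhalf k)).trans_eq ?_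
    rw [hnw k]
    have : s ^ 2 = ε := Real.sq_sqrt h0.le
    have h5 : (τ ^ k) ^ 2 = (τ ^ 2) ^ k := by
      rw [← pow_mul, ← pow_mul, Nat.mul_comm]
    rw [mul_pow, mul_pow, h5, ← this]
  have hgeo2 : Summable fun k : ℕ => (ε * ‖μ‖ ^ 2) * (τ ^ 2) ^ k :=
    (summable_geometric_of_lt_one (by positivity) hτ2).mul_left _
  have hsumn : Summable fun k : ℕ => ‖Complex.log (1 - w k) + w k‖ :=
    Summable.of_nonneg_of_le (fun k => norm_nonneg _) hsq hgeo2
  calc ‖∑' k : ℕ, (Complex.log (1 - w k) + w k)‖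
      ≤ ∑' k : ℕ, ‖Complex.log (1 - w k) + w k‖ := norm_tsum_le_tsum_norm hsumn
    _ ≤ ∑' k : ℕ, (ε * ‖μ‖ ^ 2) * (τ ^ 2) ^ k := Summable.tsum_le_tsum hsq hsumn hgeo2
    _ = (ε * ‖μ‖ ^ 2) * (1 - τ ^ 2)⁻¹ := by
        rw [tsum_mul_left, tsum_geometric_of_lt_one (by positivity) hτ2]
    _ = ε * ‖μ‖ ^ 2 / (1 - τ ^ 2) := by rw [div_eq_mul_inv]
end

section
/- Let a ∈ ℂ with |a| < 1 and let w ∈ ℂ with Re(w) > 0. Then ∑_{k=0}^∞ a^k/(w+k) = ∫_0^∞ e^{−(w−1)t}/(e^t − a) dt, where the integral converges absolutely. -/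
open MeasureTheory Set Filter Complex

lemma cexp_norm_eq (c : ℂ) (t : ℝ) : ‖Complex.exp (-c * t)‖ = Real.exp (-c.re * t) := by
  rw [Complex.norm_exp]
  congr 1
  simp [Complex.mul_re]

lemma tendsto_neg_mul_atBot {b : ℝ} (hb : 0 < b) :
    Tendsto (fun t : ℝ => -b * t) atTop atBot := by
  have : Tendsto (fun t : ℝ => b * t) atTop atTop := tendsto_id.const_mul_atTop hb
  simpa [neg_mul] using tendsto_neg_atBot_iff.mpr this

lemma integrableOn_cexp (c : ℂ) (hc : 0 < c.re) :
    IntegrableOn (fun t : ℝ => Complex.exp (-c * t)) (Ioi 0) := by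
  apply Integrable.mono' (exp_neg_integrableOn_Ioi 0 hc)
  · exact (Complex.continuous_exp.comp (by continuity)).aestronglyMeasurable
  · filter_upwards with t
    rw [cexp_norm_eq, neg_mul]

lemma hasDerivAt_cexp (c : ℂ) (hc : c ≠ 0) (t : ℝ) :
    HasDerivAt (fun t : ℝ => -c⁻¹ * Complex.exp (-c * t)) (Complex.exp (-c * t)) t := by
  have h : HasDerivAt (fun z : ℂ => -c⁻¹ * Complex.exp (-c * z))
      (Complex.exp (-c * (t : ℂ))) (t : ℂ) := by
    have h1 : HasDerivAt (fun z : ℂ => -c * z) (-c) (t : ℂ) := by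
      simpa using (hasDerivAt_id (t : ℂ)).const_mul (-c)
    have h2 := (Complex.hasDerivAt_exp (-c * (t : ℂ))).comp (t : ℂ) h1
    have h3 := h2.const_mul (-c⁻¹)
    convert h3 using 1
    case e'_9 => field_simp
    all_goals rfl
  exact h.comp_ofReal

lemma integral_cexp_Ioi (c : ℂ) (hc : 0 < c.re) :
    ∫ t in Ioi (0:ℝ), Complex.exp (-c * t) = 1 / c := by
  have hc0 : c ≠ 0 := fun h => by simp [h] at hc
  have htend : Tendsto (fun t : ℝ => -c⁻¹ * Complex.exp (-c * t)) atTop (nhds 0) := by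
    rw [tendsto_zero_iff_norm_tendsto_zero]
    have heq : (fun t : ℝ => ‖-c⁻¹ * Complex.exp (-c * t)‖)
        = fun t : ℝ => ‖c⁻¹‖ * Real.exp (-c.re * t) := by
      funext t; rw [norm_mul, norm_neg, cexp_norm_eq]
    rw [heq, show (0:ℝ) = ‖c⁻¹‖ * 0 by ring]
    exact (Real.tendsto_exp_atBot.comp (tendsto_neg_mul_atBot hc)).const_mul _
  have := integral_Ioi_of_hasDerivAt_of_tendsto' (a := 0)
    (fun x _ => hasDerivAt_cexp c hc0 x) (integrableOn_cexp c hc) htend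
  rw [this]
  simp [Complex.exp_zero, one_div]

lemma hasDerivAt_rexp (b : ℝ) (hb : b ≠ 0) (t : ℝ) :
    HasDerivAt (fun t : ℝ => -b⁻¹ * Real.exp (-b * t)) (Real.exp (-b * t)) t := by
  have h1 : HasDerivAt (fun s : ℝ => -b * s) (-b) t := by
    simpa using (hasDerivAt_id t).const_mul (-b)
  have h2 := (Real.hasDerivAt_exp (-b * t)).comp t h1
  have h3 := h2.const_mul (-b⁻¹)
  convert h3 using 1
  case e'_9 => field_simp
  all_goals rfl

lemma integral_rexp_Ioi (b : ℝ) (hb : 0 < b) :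
    ∫ t in Ioi (0:ℝ), Real.exp (-b * t) = b⁻¹ := by
  have hb0 : b ≠ 0 := ne_of_gt hb
  have hint : IntegrableOn (fun t : ℝ => Real.exp (-b * t)) (Ioi 0) := by
    simpa [neg_mul] using exp_neg_integrableOn_Ioi 0 hb
  have htend : Tendsto (fun t : ℝ => -b⁻¹ * Real.exp (-b * t)) atTop (nhds 0) := by
    rw [show (0:ℝ) = -b⁻¹ * 0 by ring]
    exact (Real.tendsto_exp_atBot.comp (tendsto_neg_mul_atBot hb)).const_mul _
  have := integral_Ioi_of_hasDerivAt_of_tendsto' (a := 0)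
    (fun x _ => hasDerivAt_rexp b hb0 x) hint htend
  rw [this]
  simp

theorem lerch_integral_representation (a : ℂ) (ha : ‖a‖ < 1) (w : ℂ) (hw : 0 < w.re) :
    MeasureTheory.IntegrableOn
      (fun t : ℝ => Complex.exp (-(w - 1) * t) / (Complex.exp t - a)) (Set.Ioi 0) ∧
    ∑' k : ℕ, a ^ k / (w + k)
      = ∫ t in Set.Ioi (0:ℝ), Complex.exp (-(w - 1) * t) / (Complex.exp t - a) := by
  have ha0 : (0:ℝ) < 1 - ‖a‖ := by linarith
  have hden : ∀ t : ℝ, 0 < t → (1 - ‖a‖) * Real.exp t ≤ ‖Complex.exp (t:ℂ) - a‖ := by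
    intro t ht
    have h1 : ‖Complex.exp (t:ℂ)‖ - ‖a‖ ≤ ‖Complex.exp (t:ℂ) - a‖ := norm_sub_norm_le _ _
    have h2 : ‖Complex.exp (t:ℂ)‖ = Real.exp t := by
      rw [Complex.norm_exp]; simp
    rw [h2] at h1
    have h3 : ‖a‖ * 1 ≤ ‖a‖ * Real.exp t := by
      apply mul_le_mul_of_nonneg_left _ (norm_nonneg a)
      rw [← Real.exp_zero]
      exact Real.exp_le_exp.mpr ht.le
    nlinarith
  have hne : ∀ t : ℝ, 0 < t → Complex.exp (t:ℂ) - a ≠ 0 := by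
    intro t ht h
    have := hden t ht
    rw [h, norm_zero] at this
    nlinarith [Real.exp_pos t]
  have hint : IntegrableOn
      (fun t : ℝ => Complex.exp (-(w - 1) * t) / (Complex.exp t - a)) (Ioi 0) := by
    apply Integrable.mono' ((exp_neg_integrableOn_Ioi 0 hw).mul_const (1 - ‖a‖)⁻¹)
    · apply ContinuousOn.aestronglyMeasurable _ measurableSet_Ioi
      apply ContinuousOn.div
      · exact (Complex.continuous_exp.comp (by continuity)).continuousOn
      · exact ((Complex.continuous_exp.comp Complex.continuous_ofReal).sub
          continuous_const).continuousOn
      · intro t ht; exact hne t ht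
    · rw [ae_restrict_iff' measurableSet_Ioi]
      filter_upwards with t ht
      rw [norm_div, cexp_norm_eq]
      have hd := hden t ht
      have hdpos : 0 < (1 - ‖a‖) * Real.exp t := mul_pos ha0 (Real.exp_pos t)
      rw [div_le_iff₀ (lt_of_lt_of_le hdpos hd)]
      have he : Real.exp (-(w - 1).re * t) = Real.exp (-w.re * t) * Real.exp t := by
        rw [← Real.exp_add]; congr 1; simp [Complex.sub_re]; ring
      rw [he]
      calc Real.exp (-w.re * t) * Real.exp t
          ≤ Real.exp (-w.re * t) * (1 - ‖a‖)⁻¹ * ((1 - ‖a‖) * Real.exp t) := by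
            rw [mul_assoc, inv_mul_cancel_left₀ (ne_of_gt ha0)]
        _ ≤ Real.exp (-w.re * t) * (1 - ‖a‖)⁻¹ * ‖Complex.exp (t:ℂ) - a‖ := by
            apply mul_le_mul_of_nonneg_left hd; positivity
  refine ⟨hint, ?_⟩
  set F : ℕ → ℝ → ℂ := fun k t => a ^ k * Complex.exp (-(w + k) * t) with hF
  have hre : ∀ k : ℕ, 0 < (w + (k:ℂ)).re := by
    intro k; simp only [Complex.add_re, Complex.natCast_re]; positivity
  have hFint : ∀ k : ℕ, IntegrableOn (F k) (Ioi 0) := fun k =>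
    (integrableOn_cexp _ (hre k)).const_mul _
  have hFval : ∀ k : ℕ, ∫ t in Ioi (0:ℝ), F k t = a ^ k / (w + k) := by
    intro k
    rw [hF]; simp only
    rw [integral_const_mul, integral_cexp_Ioi _ (hre k)]
    ring
  have hFnorm : ∀ k : ℕ, ∫ t in Ioi (0:ℝ), ‖F k t‖ = ‖a‖ ^ k * ((w + (k:ℂ)).re)⁻¹ := by
    intro k
    have hn : ∀ t : ℝ, ‖F k t‖ = ‖a‖ ^ k * Real.exp (-(w + (k:ℂ)).re * t) := by
      intro t; rw [hF]; simp only
      rw [norm_mul, norm_pow, cexp_norm_eq]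
    simp_rw [hn]
    rw [integral_const_mul, integral_rexp_Ioi _ (hre k)]
  have hFsum : Summable fun k : ℕ => ∫ t in Ioi (0:ℝ), ‖F k t‖ := by
    simp_rw [hFnorm]
    apply Summable.of_nonneg_of_le
      (fun k => mul_nonneg (by positivity) (inv_nonneg.mpr (hre k).le))
      (fun k => ?_) ((summable_geometric_of_lt_one (norm_nonneg a) ha).mul_right (w.re)⁻¹)
    apply mul_le_mul_of_nonneg_left _ (by positivity)
    apply inv_anti₀ hw
    simp only [Complex.add_re, Complex.natCast_re]
    linarith [Nat.cast_nonneg (α := ℝ) k]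
  have hswap := integral_tsum_of_summable_integral_norm hFint hFsum
  have hptwise : ∀ t ∈ Ioi (0:ℝ), (∑' k : ℕ, F k t)
      = Complex.exp (-(w - 1) * t) / (Complex.exp t - a) := by
    intro t ht
    have hr : ‖a * Complex.exp (-(t:ℂ))‖ < 1 := by
      rw [norm_mul]
      have h2 : ‖Complex.exp (-(t:ℂ))‖ = Real.exp (-t) := by
        rw [Complex.norm_exp]; simp
      rw [h2]
      have h1 : Real.exp (-t) ≤ 1 := Real.exp_le_one_iff.mpr (by linarith [ht.out])
      nlinarith [norm_nonneg a, Real.exp_pos (-t)]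
    have hgeom := tsum_geometric_of_norm_lt_one hr
    have hFt : ∀ k : ℕ, F k t = Complex.exp (-w * t) * (a * Complex.exp (-(t:ℂ))) ^ k := by
      intro k
      rw [hF]; simp only
      rw [mul_pow, ← Complex.exp_nat_mul,
        show (-(w + (k:ℂ)) * t) = -w * t + (k:ℂ) * -(t:ℂ) by push_cast; ring,
        Complex.exp_add]
      ring
    rw [tsum_congr hFt, tsum_mul_left, hgeom]
    have hexpt : Complex.exp (t:ℂ) ≠ 0 := Complex.exp_ne_zero _
    have key : Complex.exp (t:ℂ) - a
        = (1 - a * Complex.exp (-(t:ℂ))) * Complex.exp (t:ℂ) := by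
      rw [sub_mul, one_mul, mul_assoc, ← Complex.exp_add]; simp
    have hE : Complex.exp (-(w - 1) * (t:ℂ))
        = Complex.exp (-w * t) * Complex.exp (t:ℂ) := by
      rw [← Complex.exp_add]; congr 1; ring
    rw [key, hE, mul_div_mul_right _ _ hexpt, div_eq_mul_inv]
  calc ∑' k : ℕ, a ^ k / (w + k)
      = ∑' k : ℕ, ∫ t in Ioi (0:ℝ), F k t := tsum_congr fun k => (hFval k).symm
    _ = ∫ t in Ioi (0:ℝ), ∑' k : ℕ, F k t := hswap
    _ = ∫ t in Ioi (0:ℝ), Complex.exp (-(w - 1) * t) / (Complex.exp t - a) :=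
        setIntegral_congr_fun measurableSet_Ioi hptwise
end

section
/- Let p(t,x) = e^{−x²/(2t)}/√(2πt). Then for all T > 0 and X ∈ ℝ, ∫_0^T ∫_ℝ p(T−S, X−Y)² p(S,Y)² dY dS = (√(πT)/2) · p(T,X)². -/
noncomputable def heatKernel (t x : ℝ) : ℝ :=
  Real.exp (-x ^ 2 / (2 * t)) / Real.sqrt (2 * Real.pi * t)

open MeasureTheory Real Set

lemma heatKernel_sq {t : ℝ} (ht : 0 < t) (x : ℝ) :
    heatKernel t x ^ 2 = heatKernel (t / 2) x / (2 * Real.sqrt (Real.pi * t)) := by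
  unfold heatKernel
  rw [div_pow, Real.sq_sqrt (by positivity), ← Real.exp_nat_mul, div_div]
  congr 1
  · congr 1; push_cast; field_simp
  · rw [show 2 * Real.pi * (t / 2) = Real.pi * t by ring,
      show √(Real.pi*t) * (2*√(Real.pi*t)) = 2*(√(Real.pi*t)*√(Real.pi*t)) by ring,
      Real.mul_self_sqrt (by positivity)]
    ring

lemma beta_half : ∫ x in (0:ℝ)..1, (Real.sqrt (x * (1 - x)))⁻¹ = Real.pi := by
  have hB : Complex.betaIntegral (1/2) (1/2) = (Real.pi : ℂ) := by
    have h := Complex.Gamma_mul_Gamma_eq_betaIntegral (s := 1/2) (t := 1/2)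
      (by norm_num) (by norm_num)
    rw [show (1/2 + 1/2 : ℂ) = 1 by norm_num, Complex.Gamma_one, one_mul] at h
    rw [← h, show (1/2 : ℂ) = ((1/2 : ℝ) : ℂ) by norm_num, Complex.Gamma_ofReal,
      Real.Gamma_one_half_eq, ← Complex.ofReal_mul,
      Real.mul_self_sqrt Real.pi_nonneg]
  have hcongr : ∀ x ∈ Set.uIcc (0:ℝ) 1,
      (x : ℂ) ^ ((1/2 : ℂ) - 1) * ((1:ℂ) - x) ^ ((1/2 : ℂ) - 1)
        = (((Real.sqrt (x * (1 - x)))⁻¹ : ℝ) : ℂ) := by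
    intro x hx
    rw [Set.uIcc_of_le (by norm_num)] at hx
    obtain ⟨hx0, hx1⟩ := hx
    have h1x : (0:ℝ) ≤ 1 - x := by linarith
    rw [show ((1/2 : ℂ) - 1) = ((-(1/2) : ℝ) : ℂ) by norm_num,
      show ((1:ℂ) - x) = (((1 - x : ℝ)) : ℂ) by push_cast; ring,
      ← Complex.ofReal_cpow hx0, ← Complex.ofReal_cpow h1x, ← Complex.ofReal_mul]
    congr 1
    rw [Real.rpow_neg hx0, Real.rpow_neg h1x, ← mul_inv, Real.sqrt_mul hx0,
      Real.sqrt_eq_rpow, Real.sqrt_eq_rpow]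
  have h2 := intervalIntegral.integral_congr (μ := volume) hcongr
  rw [Complex.betaIntegral] at hB
  rw [h2, intervalIntegral.integral_ofReal] at hB
  exact_mod_cast hB


lemma arcsine_integral {T : ℝ} (hT : 0 < T) :
    ∫ S in Set.Ioo (0:ℝ) T, (Real.sqrt (S * (T - S)))⁻¹ = Real.pi := by
  rw [← MeasureTheory.integral_Ioc_eq_integral_Ioo,
    ← intervalIntegral.integral_of_le hT.le]
  have key : ∀ x : ℝ, (fun S => (Real.sqrt (S * (T - S)))⁻¹) (T * x)
      = T⁻¹ * (Real.sqrt (x * (1 - x)))⁻¹ := by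
    intro x
    simp only
    rw [show T * x * (T - T * x) = T ^ 2 * (x * (1 - x)) by ring,
      Real.sqrt_mul (sq_nonneg T), Real.sqrt_sq hT.le, mul_inv]
  have h := intervalIntegral.integral_comp_mul_left
    (f := fun S => (Real.sqrt (S * (T - S)))⁻¹) (a := 0) (b := 1) (c := T) hT.ne'
  simp only [key, mul_zero, mul_one] at h
  rw [intervalIntegral.integral_const_mul, beta_half] at h
  rw [← smul_eq_mul] at h
  have := congrArg (fun z => T • z) h.symm
  simp only [smul_smul, mul_inv_cancel₀ hT.ne', one_smul, smul_eq_mul] at this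
  rwa [← mul_assoc, mul_inv_cancel₀ hT.ne', one_mul, ← mul_assoc,
    mul_inv_cancel₀ hT.ne', one_mul] at this

lemma heatKernel_conv {s t : ℝ} (hs : 0 < s) (ht : 0 < t) (x : ℝ) :
    ∫ y : ℝ, heatKernel s (x - y) * heatKernel t y = heatKernel (s + t) x := by
  have hst : (0:ℝ) < s + t := by linarith
  set a : ℝ := (s + t) / (2 * s * t) with ha_def
  set m : ℝ := t * x / (s + t) with hm_def
  have ha : 0 < a := by rw [ha_def]; positivity
  have key : ∀ y : ℝ, heatKernel s (x - y) * heatKernel t y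
      = (heatKernel (s + t) x / Real.sqrt (Real.pi / a)) * Real.exp (-a * (y - m) ^ 2) := by
    intro y
    unfold heatKernel
    rw [div_mul_div_comm, ← Real.exp_add, div_div, div_mul_eq_mul_div, ← Real.exp_add]
    congr 1
    · rw [ha_def, hm_def]; congr 1; field_simp; ring
    · rw [← Real.sqrt_mul (by positivity), ← Real.sqrt_mul (by positivity)]
      congr 1
      rw [ha_def]; field_simp
  simp_rw [key]
  rw [MeasureTheory.integral_const_mul]
  have hgauss : ∫ y : ℝ, Real.exp (-a * (y - m) ^ 2) = Real.sqrt (Real.pi / a) := by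
    exact (MeasureTheory.integral_sub_right_eq_self
      (fun y : ℝ => Real.exp (-a * y ^ 2)) m).trans (integral_gaussian a)
  rw [hgauss, div_mul_cancel₀]
  positivity

theorem heatKernel_sq_convolution (T X : ℝ) (hT : 0 < T) :
    ∫ S in Set.Ioo (0:ℝ) T, ∫ Y : ℝ, (heatKernel (T - S) (X - Y)) ^ 2 * (heatKernel S Y) ^ 2
      = (Real.sqrt (Real.pi * T) / 2) * (heatKernel T X) ^ 2 := by
  have hπT : (0:ℝ) < Real.pi * T := by positivity
  have hmain : ∀ S ∈ Set.Ioo (0:ℝ) T,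
      (∫ Y : ℝ, (heatKernel (T - S) (X - Y)) ^ 2 * (heatKernel S Y) ^ 2)
        = (heatKernel (T / 2) X / (4 * Real.pi)) * (Real.sqrt (S * (T - S)))⁻¹ := by
    intro S hS
    obtain ⟨hS0, hST⟩ := hS
    have hTS : 0 < T - S := by linarith
    simp_rw [heatKernel_sq hTS, heatKernel_sq hS0, div_mul_div_comm]
    rw [MeasureTheory.integral_div]
    have hc : ∫ Y : ℝ, heatKernel ((T - S) / 2) (X - Y) * heatKernel (S / 2) Y
        = heatKernel (T / 2) X := by
      rw [heatKernel_conv (by linarith) (by linarith) X,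
        show (T - S) / 2 + S / 2 = T / 2 by ring]
    rw [hc]
    rw [show 2 * Real.sqrt (Real.pi * (T - S)) * (2 * Real.sqrt (Real.pi * S))
        = 4 * (Real.sqrt (Real.pi * (T - S)) * Real.sqrt (Real.pi * S)) by ring,
      ← Real.sqrt_mul (by positivity),
      show Real.pi * (T - S) * (Real.pi * S) = Real.pi ^ 2 * (S * (T - S)) by ring,
      Real.sqrt_mul (sq_nonneg Real.pi), Real.sqrt_sq Real.pi_pos.le]
    rw [← div_eq_mul_inv, div_div]
    congr 1
    ring
  rw [MeasureTheory.setIntegral_congr_fun measurableSet_Ioo hmain,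
    MeasureTheory.integral_const_mul, arcsine_integral hT, heatKernel_sq hT X]
  have hs : Real.sqrt (Real.pi * T) ≠ 0 := by positivity
  field_simp
  ring
end

section
/- Let 0 < p < 1, q = 1 − p, λ = (1/2)·log(q/p), ν = 1 − 2√(pq), and D = 2√(pq). Then for all a, b ∈ {−1, 1}: (D/2)·(e^{−λb} − 2 + e^{λa}) = ν + (e^{−2λ} − 1)·q·(1−a)(1+b)/4 + (e^{2λ} − 1)·p·(1+a)(1−b)/4. -/
theorem microscopic_hopf_cole_identity (p : ℝ) (hp : 0 < p) (hp1 : p < 1)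
    (q lam ν D : ℝ) (hq : q = 1 - p) (hlam : lam = (1/2) * Real.log (q / p))
    (hν : ν = 1 - 2 * Real.sqrt (p * q)) (hD : D = 2 * Real.sqrt (p * q))
    (a b : ℝ) (ha : a = -1 ∨ a = 1) (hb : b = -1 ∨ b = 1) :
    (D / 2) * (Real.exp (-lam * b) - 2 + Real.exp (lam * a))
      = ν + (Real.exp (-2 * lam) - 1) * q * (1 - a) * (1 + b) / 4
          + (Real.exp (2 * lam) - 1) * p * (1 + a) * (1 - b) / 4 := by
  have hq0 : 0 < q := by rw [hq]; linarith
  have hqp : 0 < q / p := div_pos hq0 hp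
  have hpq : 0 < p / q := div_pos hp hq0
  have he : Real.exp lam = Real.sqrt (q / p) := by
    rw [hlam, Real.sqrt_eq_rpow, Real.rpow_def_of_pos hqp]; ring_nf
  have he2 : Real.exp (-lam) = Real.sqrt (p / q) := by
    rw [hlam, Real.sqrt_eq_rpow, Real.rpow_def_of_pos hpq,
      show p / q = (q / p)⁻¹ by rw [inv_div], Real.log_inv]
    ring_nf
  have h1 : Real.sqrt (p * q) * Real.exp lam = q := by
    rw [he, ← Real.sqrt_mul (by positivity),
      show p * q * (q / p) = q * q by field_simp,
      Real.sqrt_mul_self hq0.le]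
  have h2 : Real.sqrt (p * q) * Real.exp (-lam) = p := by
    rw [he2, ← Real.sqrt_mul (by positivity),
      show p * q * (p / q) = p * p by field_simp,
      Real.sqrt_mul_self hp.le]
  have h3 : Real.exp (2 * lam) = q / p := by
    rw [show (2:ℝ) * lam = lam + lam by ring, Real.exp_add, he,
      Real.mul_self_sqrt hqp.le]
  have h4 : Real.exp (-2 * lam) = p / q := by
    rw [show (-2:ℝ) * lam = -lam + -lam by ring, Real.exp_add, he2,
      Real.mul_self_sqrt hpq.le]
  have hpq1 : p + q = 1 := by rw [hq]; ring
  rw [Real.sqrt_mul hp.le] at h1 h2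
  subst hν hD
  rw [Real.sqrt_mul hp.le]
  rcases ha with rfl | rfl <;> rcases hb with rfl | rfl <;>
    simp only [h3, h4] <;> field_simp <;> nlinarith [h1, h2, hpq1]
end
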